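/- arXiv:1705.00133 — 2 statements merged into one kernel-verified Lean document; each statement's English description precedes it below -/
import Mathlib

section
/- (Optimal subset coupling as corollary.) Let μ ∈ SubDist(A) and P₂ ⊆ P₁ ⊆ A. Then μ[P₁] ≤ e^ε · μ[P₂] if and only if for all X ⊆ A, μ[X] ≤ e^ε · μ[R(X)], where R = {(a₁,a₂) : a₁ ∈ P₁ ↔ a₂ ∈ P₂}. -/
open scoped ENNReal

noncomputable section

def mass {A : Type*} (μ : A → ℝ≥0∞) (X : Set A) : ℝ≥0∞ := ∑' x : X, μ x

def SubDist {A : Type*} (μ : A → ℝ≥0∞) : Prop := mass μ Set.univ ≤ 1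

def dpDiv {B : Type*} (ε : ℝ) (μ ν : B → ℝ≥0∞) : ℝ≥0∞ :=
  ⨆ E : Set B, (mass μ E - ENNReal.ofReal (Real.exp ε) * mass ν E)

def relImage {A B : Type*} (R : A → B → Prop) (X : Set A) : Set B :=
  {b | ∃ a ∈ X, R a b}

def extL {A B : Type*} (η : A × Option B → ℝ≥0∞) : Option A × Option B → ℝ≥0∞ :=
  fun p => p.1.elim 0 (fun a => η (a, p.2))

def extR {A B : Type*} (η : Option A × B → ℝ≥0∞) : Option A × Option B → ℝ≥0∞ :=
  fun p => p.2.elim 0 (fun b => η (p.1, b))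

/-- The conditions for a pair `(ηL, ηR)` to witness an `(ε,δ)`-approximate ⋆-lifting
of `μ₁` and `μ₂` for the relation `R`.  Here `⋆` is represented by `none`. -/
def IsStarWitness {A B : Type*} (ε δ : ℝ) (μ₁ : A → ℝ≥0∞) (μ₂ : B → ℝ≥0∞)
    (R : A → B → Prop) (ηL : A × Option B → ℝ≥0∞) (ηR : Option A × B → ℝ≥0∞) : Prop :=
  SubDist ηL ∧ SubDist ηR ∧
  (∀ a, (∑' b : Option B, ηL (a, b)) = μ₁ a) ∧
  (∀ b, (∑' a : Option A, ηR (a, b)) = μ₂ b) ∧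
  (∀ a b, ηL (a, some b) ≠ 0 → R a b) ∧
  (∀ a b, ηR (some a, b) ≠ 0 → R a b) ∧
  dpDiv ε (extL ηL) (extR ηR) ≤ ENNReal.ofReal δ

/-- Existence of an `(ε,δ)`-approximate ⋆-lifting. -/
def StarLift {A B : Type*} (ε δ : ℝ) (μ₁ : A → ℝ≥0∞) (μ₂ : B → ℝ≥0∞)
    (R : A → B → Prop) : Prop :=
  ∃ ηL ηR, IsStarWitness ε δ μ₁ μ₂ R ηL ηR

lemma mass_mono {A : Type*} (μ : A → ℝ≥0∞) {X Y : Set A} (h : X ⊆ Y) :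
    mass μ X ≤ mass μ Y := by
  rw [mass, mass, tsum_subtype, tsum_subtype]
  exact ENNReal.tsum_le_tsum fun a =>
    Set.indicator_le_indicator_of_subset h (fun _ => zero_le) a

lemma one_le_exp' (ε : ℝ) (hε : 0 ≤ ε) : (1:ℝ≥0∞) ≤ ENNReal.ofReal (Real.exp ε) := by
  rw [ENNReal.one_le_ofReal]
  exact Real.one_le_exp hε

theorem optimal_subset_coupling {A : Type*}
    (μ : A → ℝ≥0∞) (hμ : SubDist μ) (P₁ P₂ : Set A) (hP : P₂ ⊆ P₁)
    (ε : ℝ) (hε : 0 ≤ ε) :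
    mass μ P₁ ≤ ENNReal.ofReal (Real.exp ε) * mass μ P₂
    ↔ (∀ X : Set A,
        mass μ X ≤ ENNReal.ofReal (Real.exp ε)
          * mass μ (relImage (fun a₁ a₂ => a₁ ∈ P₁ ↔ a₂ ∈ P₂) X)) := by
  have hexp := one_le_exp' ε hε
  constructor
  · intro h X
    by_cases h1 : ∃ a ∈ X, a ∈ P₁
    · by_cases h2 : ∃ a ∈ X, a ∉ P₁
      · -- R(X) = univ
        obtain ⟨a, haX, haP⟩ := h1
        obtain ⟨a', ha'X, ha'P⟩ := h2
        have hsub : Set.univ ⊆ relImage (fun a₁ a₂ => a₁ ∈ P₁ ↔ a₂ ∈ P₂) X := by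
          intro b _
          by_cases hb : b ∈ P₂
          · exact ⟨a, haX, by simp [haP, hb]⟩
          · exact ⟨a', ha'X, by simp [ha'P, hb]⟩
        calc mass μ X ≤ mass μ (relImage (fun a₁ a₂ => a₁ ∈ P₁ ↔ a₂ ∈ P₂) X) :=
              mass_mono μ (Set.subset_univ X |>.trans hsub)
          _ ≤ _ := le_mul_of_one_le_left (zero_le) hexp
      · -- X ⊆ P₁
        push_neg at h2
        obtain ⟨a, haX, haP⟩ := h1
        have hsub : P₂ ⊆ relImage (fun a₁ a₂ => a₁ ∈ P₁ ↔ a₂ ∈ P₂) X := by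
          intro b hb
          exact ⟨a, haX, by simp [haP, hb]⟩
        calc mass μ X ≤ mass μ P₁ := mass_mono μ h2
          _ ≤ ENNReal.ofReal (Real.exp ε) * mass μ P₂ := h
          _ ≤ _ := by exact mul_le_mul_right (mass_mono μ hsub) _
    · by_cases h2 : ∃ a ∈ X, a ∉ P₁
      · -- X ⊆ P₁ᶜ ⊆ P₂ᶜ, R(X) ⊇ P₂ᶜ
        push_neg at h1
        obtain ⟨a, haX, haP⟩ := h2
        have hsub : P₂ᶜ ⊆ relImage (fun a₁ a₂ => a₁ ∈ P₁ ↔ a₂ ∈ P₂) X := by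
          intro b hb
          exact ⟨a, haX, by simpa [haP] using hb⟩
        have hX : X ⊆ P₂ᶜ := fun x hx hx2 => h1 x hx (hP hx2)
        calc mass μ X ≤ mass μ (relImage (fun a₁ a₂ => a₁ ∈ P₁ ↔ a₂ ∈ P₂) X) :=
              mass_mono μ (hX.trans hsub)
          _ ≤ _ := le_mul_of_one_le_left (zero_le) hexp
      · -- X empty
        push_neg at h1
        push_neg at h2
        have : X = ∅ := by
          ext x; simp only [Set.mem_empty_iff_false, iff_false]
          intro hx; exact h1 x hx (h2 x hx)
        subst this
        have : mass μ (∅ : Set A) = 0 := by simp [mass]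
        rw [this]; exact zero_le
  · intro h
    have := h P₁
    have hsub : relImage (fun a₁ a₂ => a₁ ∈ P₁ ↔ a₂ ∈ P₂) P₁ ⊆ P₂ := by
      rintro b ⟨a, haP, hab⟩
      exact hab.mp haP
    exact this.trans (mul_le_mul_right (mass_mono μ hsub) _)
end
end

section
/- (⋆-liftings characterize differential privacy.) A randomized algorithm P : A → SubDist(B) is (ε,δ)-differentially private w.r.t. adjacency relation φ ⊆ A × A if and only if for all (a₁,a₂) ∈ φ there exists an (ε,δ)-approximate ⋆-lifting of P(a₁) and P(a₂) for the equality relation on B. -/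
open scoped ENNReal

noncomputable section

/-! ### Auxiliary lemmas -/

lemma tsum_option' {α : Type*} (f : Option α → ℝ≥0∞) :
    ∑' x, f x = f none + ∑' a, f (some a) := by
  rw [ENNReal.tsum_eq_add_tsum_ite (f := f) none]
  congr 1
  refine tsum_eq_tsum_of_ne_zero_bij (fun a => some a.1) ?_ ?_ ?_
  · intro x y h; exact Subtype.ext (Option.some_injective _ h)
  · rintro (_|a) hx
    · simp at hx
    · exact ⟨⟨a, by simpa using hx⟩, rfl⟩
  · intro x; simp

lemma mass_le_tsum {A : Type*} (μ : A → ℝ≥0∞) (X : Set A) :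
    mass μ X ≤ ∑' x, μ x := by
  rw [mass, tsum_subtype]
  exact ENNReal.tsum_le_tsum fun a => Set.indicator_le_self _ _ a

lemma mass_univ_eq {A : Type*} (μ : A → ℝ≥0∞) :
    mass μ Set.univ = ∑' x, μ x := by
  rw [mass, tsum_univ]

lemma apply_le_one_of_subDist {A : Type*} {μ : A → ℝ≥0∞} (h : SubDist μ) (a : A) :
    μ a ≤ 1 :=
  le_trans (ENNReal.le_tsum a) (le_trans (mass_univ_eq μ).ge h)

/-- Computation of the mass of a product set `(some '' E) ×ˢ univ`. -/
lemma mass_prod_image_univ {B : Type*} (E : Set B) (f : Option B × Option B → ℝ≥0∞) :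
    mass f ((some '' E) ×ˢ (Set.univ : Set (Option B)))
      = ∑' b, E.indicator (fun b => ∑' o, f (some b, o)) b := by
  rw [mass, tsum_subtype, ENNReal.tsum_prod']
  rw [tsum_option' (fun a => ∑' o,
    ((some '' E) ×ˢ (Set.univ : Set (Option B))).indicator f (a, o))]
  have hnone : ∀ o : Option B,
      ((some '' E) ×ˢ (Set.univ : Set (Option B))).indicator f (none, o) = 0 := by
    intro o
    apply Set.indicator_of_notMem
    simp
  rw [tsum_congr hnone, tsum_zero, zero_add]
  refine tsum_congr fun b => ?_
  by_cases hb : b ∈ E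
  · rw [Set.indicator_of_mem hb]
    refine tsum_congr fun o => ?_
    apply Set.indicator_of_mem
    simp [hb]
  · rw [Set.indicator_of_notMem hb]
    have : ∀ o : Option B,
        ((some '' E) ×ˢ (Set.univ : Set (Option B))).indicator f (some b, o) = 0 := by
      intro o
      apply Set.indicator_of_notMem
      simp [hb, (Option.some_injective B).eq_iff]
    rw [tsum_congr this, tsum_zero]

theorem dp_iff_starLift_eq {A B : Type*}
    (P : A → B → ℝ≥0∞) (hP : ∀ a, SubDist (P a)) (φ : A → A → Prop)
    (ε δ : ℝ) (hε : 0 ≤ ε) (hδ : 0 ≤ δ) :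
    (∀ a₁ a₂, φ a₁ a₂ → ∀ E : Set B,
        mass (P a₁) E ≤ ENNReal.ofReal (Real.exp ε) * mass (P a₂) E + ENNReal.ofReal δ)
    ↔ (∀ a₁ a₂, φ a₁ a₂ → StarLift ε δ (P a₁) (P a₂) (fun b₁ b₂ => b₁ = b₂)) := by
  classical
  set e : ℝ≥0∞ := ENNReal.ofReal (Real.exp ε) with he
  have heT : e ≠ ∞ := ENNReal.ofReal_ne_top
  constructor
  · -- DP ⇒ lifting
    intro hdp a₁ a₂ hφ
    set μ : B → ℝ≥0∞ := P a₁ with hμdef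
    set ν : B → ℝ≥0∞ := P a₂ with hνdef
    have hμ : (∑' b, μ b) ≤ 1 := by rw [← mass_univ_eq]; exact hP a₁
    have hν : (∑' b, ν b) ≤ 1 := by rw [← mass_univ_eq]; exact hP a₂
    have hDP : ∀ E : Set B, mass μ E ≤ e * mass ν E + ENNReal.ofReal δ := hdp a₁ a₂ hφ
    -- the witnesses
    set ηL : B × Option B → ℝ≥0∞ := fun p =>
      p.2.elim (μ p.1 - e * ν p.1) (fun b' => if p.1 = b' then min (μ p.1) (e * ν p.1) else 0)
      with hηL
    set ηR : Option B × B → ℝ≥0∞ := fun p =>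
      p.1.elim 0 (fun b' => if b' = p.2 then ν p.2 else 0) with hηR
    -- marginals
    have hmargL : ∀ b, (∑' o : Option B, ηL (b, o)) = μ b := by
      intro b
      rw [tsum_option']
      have h1 : (∑' b' : B, ηL (b, some b')) = min (μ b) (e * ν b) := by
        rw [tsum_eq_single b]
        · simp [hηL]
        · intro b' hb'
          simp [hηL, Ne.symm hb']
      rw [h1]
      show (μ b - e * ν b) + min (μ b) (e * ν b) = μ b
      rcases le_total (μ b) (e * ν b) with h | h
      · rw [min_eq_left h, tsub_eq_zero_of_le h, zero_add]
      · rw [min_eq_right h, tsub_add_cancel_of_le h]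
    have hmargR : ∀ b, (∑' o : Option B, ηR (o, b)) = ν b := by
      intro b
      rw [tsum_option']
      have h1 : (∑' b' : B, ηR (some b', b)) = ν b := by
        rw [tsum_eq_single b]
        · simp [hηR]
        · intro b' hb'
          simp [hηR, hb']
      simp [h1, hηR]
    -- subdistributions
    have hsubL : SubDist ηL := by
      show mass ηL Set.univ ≤ 1
      rw [mass_univ_eq, ENNReal.tsum_prod']
      calc (∑' b, ∑' o, ηL (b, o)) = ∑' b, μ b := tsum_congr hmargL
        _ ≤ 1 := hμ
    have hsubR : SubDist ηR := by
      show mass ηR Set.univ ≤ 1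
      rw [mass_univ_eq, ENNReal.tsum_prod', ENNReal.tsum_comm]
      calc (∑' b, ∑' o, ηR (o, b)) = ∑' b, ν b := tsum_congr hmargR
        _ ≤ 1 := hν
    refine ⟨ηL, ηR, hsubL, hsubR, hmargL, hmargR, ?_, ?_, ?_⟩
    · intro b b' hne
      by_contra h
      exact hne (by simp [hηL, h])
    · intro b b' hne
      by_contra h
      exact hne (by simp [hηR, h])
    · -- the dpDiv bound
      rw [dpDiv]
      refine iSup_le fun X => ?_
      rw [tsub_le_iff_right]
      -- split extL ηL into the diagonal part g and the star part h
      set g : Option B × Option B → ℝ≥0∞ := fun p =>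
        p.1.elim 0 (fun b => p.2.elim 0
          (fun b' => if b = b' then min (μ b) (e * ν b) else 0)) with hg
      set h : Option B × Option B → ℝ≥0∞ := fun p =>
        p.1.elim 0 (fun b => p.2.elim (μ b - e * ν b) (fun _ => 0)) with hh
      have hsplit : ∀ p, extL ηL p = g p + h p := by
        rintro ⟨(_|b), (_|b')⟩ <;> simp [extL, hηL, hg, hh]
      have hmass_split : mass (extL ηL) X = mass g X + mass h X := by
        rw [mass, mass, mass, ← ENNReal.tsum_add]
        exact tsum_congr fun p => hsplit p
      -- the diagonal part is dominated by e * extR ηR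
      have hgle : ∀ p, g p ≤ e * extR ηR p := by
        rintro ⟨(_|b), (_|b')⟩
        · simp [hg]
        · simp [hg]
        · simp [hg]
        · show (if b = b' then min (μ b) (e * ν b) else 0) ≤ e * ηR (some b, b')
          by_cases hbb : b = b'
          · subst hbb
            rw [if_pos rfl]
            simpa [hηR] using min_le_right (μ b) (e * ν b)
          · rw [if_neg hbb]
            simp
      have hmassg : mass g X ≤ e * mass (extR ηR) X := by
        rw [mass, mass, ← ENNReal.tsum_mul_left]
        exact ENNReal.tsum_le_tsum fun p => hgle p
      -- the star part has total mass at most δ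
      have hmassh : mass h X ≤ ENNReal.ofReal δ := by
        refine le_trans (mass_le_tsum h X) ?_
        have htot : (∑' p, h p) = ∑' b, (μ b - e * ν b) := by
          rw [ENNReal.tsum_prod', tsum_option' (fun a => ∑' o, h (a, o))]
          have h0 : (∑' o : Option B, h (none, o)) = 0 := by simp [hh]
          rw [h0, zero_add]
          refine tsum_congr fun b => ?_
          rw [tsum_option']
          simp [hh]
        rw [htot]
        set Es : Set B := {b | e * ν b < μ b} with hEs
        have hsupp : Function.support (fun b => μ b - e * ν b) ⊆ Es := by
          intro b hb
          rw [Function.mem_support] at hb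
          by_contra hlt
          exact hb (tsub_eq_zero_of_le (not_lt.mp hlt))
        have hrw : (∑' b, (μ b - e * ν b)) = ∑' b : Es, (μ b - e * ν b) :=
          (tsum_subtype_eq_of_support_subset hsupp).symm
        rw [hrw]
        have hT : (∑' b : Es, e * ν b) = e * mass ν Es := by
          rw [mass, ENNReal.tsum_mul_left]
        have hTfin : (∑' b : Es, e * ν b) ≠ ∞ := by
          rw [hT]
          exact ENNReal.mul_ne_top heT
            (lt_of_le_of_lt (le_trans (mass_le_tsum ν Es) hν) ENNReal.one_lt_top).ne
        have hkey : (∑' b : Es, (μ b - e * ν b)) + (∑' b : Es, e * ν b)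
            = ∑' b : Es, μ b := by
          rw [← ENNReal.tsum_add]
          refine tsum_congr fun b => ?_
          exact tsub_add_cancel_of_le (le_of_lt b.2)
        have hmain : (∑' b : Es, (μ b - e * ν b)) + (∑' b : Es, e * ν b)
            ≤ ENNReal.ofReal δ + (∑' b : Es, e * ν b) := by
          rw [hkey, hT]
          calc (∑' b : Es, μ b) = mass μ Es := rfl
            _ ≤ e * mass ν Es + ENNReal.ofReal δ := hDP Es
            _ = ENNReal.ofReal δ + e * mass ν Es := add_comm _ _
        exact (ENNReal.add_le_add_iff_right hTfin).mp hmain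
      calc mass (extL ηL) X = mass g X + mass h X := hmass_split
        _ ≤ e * mass (extR ηR) X + ENNReal.ofReal δ := add_le_add hmassg hmassh
        _ = ENNReal.ofReal δ + e * mass (extR ηR) X := add_comm _ _
  · -- lifting ⇒ DP
    intro hlift a₁ a₂ hφ E
    obtain ⟨ηL, ηR, _, _, hmL, hmR, _, hsR, hdiv⟩ := hlift a₁ a₂ hφ
    set μ : B → ℝ≥0∞ := P a₁ with hμdef
    set ν : B → ℝ≥0∞ := P a₂ with hνdef
    set X : Set (Option B × Option B) := (some '' E) ×ˢ (Set.univ : Set (Option B)) with hX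
    have hXdiv : mass (extL ηL) X - e * mass (extR ηR) X ≤ ENNReal.ofReal δ :=
      le_trans (le_iSup (fun Y => mass (extL ηL) Y - e * mass (extR ηR) Y) X) hdiv
    have hXle : mass (extL ηL) X ≤ e * mass (extR ηR) X + ENNReal.ofReal δ := by
      rw [add_comm]
      exact tsub_le_iff_right.mp hXdiv
    -- left mass equals mass μ E
    have hLX : mass (extL ηL) X = mass μ E := by
      rw [hX, mass_prod_image_univ]
      have h1 : ∀ b, E.indicator (fun b => ∑' o, extL ηL (some b, o)) b = E.indicator μ b := by
        intro b
        by_cases hb : b ∈ E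
        · rw [Set.indicator_of_mem hb, Set.indicator_of_mem hb]
          exact hmL b
        · rw [Set.indicator_of_notMem hb, Set.indicator_of_notMem hb]
      rw [tsum_congr h1, mass, tsum_subtype]
    -- right mass is at most mass ν E
    have hRX : mass (extR ηR) X ≤ mass ν E := by
      rw [hX, mass_prod_image_univ, mass, tsum_subtype]
      refine ENNReal.tsum_le_tsum fun b => ?_
      by_cases hb : b ∈ E
      · rw [Set.indicator_of_mem hb, Set.indicator_of_mem hb]
        have h1 : (∑' o : Option B, extR ηR (some b, o)) = ηR (some b, b) := by
          rw [tsum_option']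
          show (0 : ℝ≥0∞) + (∑' b' : B, ηR (some b, b')) = ηR (some b, b)
          rw [zero_add]
          refine tsum_eq_single b fun b' hb' => ?_
          by_contra hne
          exact hb' ((hsR b b' hne).symm)
        rw [h1]
        exact le_trans (ENNReal.le_tsum (some b)) (le_of_eq (hmR b))
      · rw [Set.indicator_of_notMem hb, Set.indicator_of_notMem hb]
    calc mass μ E = mass (extL ηL) X := hLX.symm
      _ ≤ e * mass (extR ηR) X + ENNReal.ofReal δ := hXle
      _ ≤ e * mass ν E + ENNReal.ofReal δ :=
        add_le_add_left (mul_le_mul_right hRX e) _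
end
end
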